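/- Let f be a forest with σ trees and m tree edges, with facial sequence f(0),…,f(2m+σ) and contour function C_f(i) = |f(i)| + t(f) − a(f(i)). Then for every 0 ≤ i ≤ 2m+σ, the oldest ancestor satisfies a(f(i)) − 1 = σ − min_{0 ≤ j ≤ i} C_f(j). -/

import Mathlib

/-- A forest with `t` trees, in Bettinelli's formalism: a finite set of nonempty lists of
positive integers (a list `[u₁, …, uₙ]` encodes the vertex `u₁…uₙ ∈ ⋃ₖ ℕᵏ`) such that
the floor is `{1, …, t+1}`, parents of elements belong to the forest, children of any
vertex form an initial segment `{1, …, c}` of ℕ, and the last floor vertex `t+1` has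
no children. -/
def IsForest (f : Finset (List ℕ)) (t : ℕ) : Prop :=
  1 ≤ t ∧
  (∀ u ∈ f, u ≠ []) ∧
  (∀ j : ℕ, ([j] ∈ f ↔ 1 ≤ j ∧ j ≤ t + 1)) ∧
  (∀ u ∈ f, 2 ≤ u.length → u.dropLast ∈ f) ∧
  (∀ u ∈ f, ∃ c : ℕ, ∀ i : ℕ, (u ++ [i] ∈ f ↔ 1 ≤ i ∧ i ≤ c)) ∧
  (∀ i : ℕ, [t + 1, i] ∉ f)

/-- `F i` has a child in `f` that has not yet appeared in the sequence `F 0, …, F i`. -/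
def HasNewChild (f : Finset (List ℕ)) (F : ℕ → List ℕ) (i : ℕ) : Prop :=
  ∃ j : ℕ, F i ++ [j] ∈ f ∧ ∀ k ≤ i, F k ≠ F i ++ [j]

/-- One step of the facial (depth-first contour) exploration: if `F i` has a child not yet
visited, go to the first such child; otherwise, if `F i` is not on the floor, go to its
parent; otherwise move to the next tree root. -/
def FacialStep (f : Finset (List ℕ)) (F : ℕ → List ℕ) (i : ℕ) : Prop :=
  (∃ j : ℕ, F (i + 1) = F i ++ [j] ∧ F i ++ [j] ∈ f ∧ (∀ k ≤ i, F k ≠ F i ++ [j]) ∧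
      ∀ j' < j, F i ++ [j'] ∈ f → ∃ k ≤ i, F k = F i ++ [j']) ∨
  (¬ HasNewChild f F i ∧ 2 ≤ (F i).length ∧ F (i + 1) = (F i).dropLast) ∨
  (¬ HasNewChild f F i ∧ (F i).length = 1 ∧ F (i + 1) = [(F i).headI + 1])

/-- `F` is the facial sequence of the forest `f` up to time `N`. -/
def IsFacialSeq (f : Finset (List ℕ)) (F : ℕ → List ℕ) (N : ℕ) : Prop :=
  F 0 = [1] ∧ ∀ i < N, FacialStep f F i

/-- For a forest `f` with `t = σ` trees and `m` tree edges, with facial sequence `F` and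
contour function `C i = |f(i)| + t − a(f(i))` (where `a(u) = u₁` is the index of the tree
containing `u`), the oldest ancestor satisfies
`a(f(i)) − 1 = σ − min_{0 ≤ j ≤ i} C j` for every `0 ≤ i ≤ 2m + σ`. -/
lemma headI_dropLast' (l : List ℕ) (h : 2 ≤ l.length) : l.dropLast.headI = l.headI := by
  match l with
  | a :: b :: rest => simp

lemma headI_append' (l : List ℕ) (j : ℕ) (h : l ≠ []) : (l ++ [j]).headI = l.headI := by
  cases l with
  | nil => exact absurd rfl h
  | cons a s => simp

theorem oldestAncestor_eq_of_contour (f : Finset (List ℕ)) (t m : ℕ) (hf : IsForest f t)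
    (hcard : f.card = m + t + 1) (F : ℕ → List ℕ) (hF : IsFacialSeq f F (2 * m + t))
    (C : ℕ → ℤ) (hC : ∀ i, C i = ((F i).length : ℤ) + t - (F i).headI) :
    ∀ i ≤ 2 * m + t,
      ((F i).headI : ℤ) - 1 = (t : ℤ) - ((Finset.range (i + 1)).image C).min' (by simp) := by
  obtain ⟨hF0, hstep⟩ := hF
  suffices H : ∀ i ≤ 2 * m + t, F i ≠ [] ∧
      ((Finset.range (i + 1)).image C).min' (by simp) = (t : ℤ) + 1 - (F i).headI by
    intro i hi
    obtain ⟨-, h2⟩ := H i hi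
    rw [h2]; ring
  intro i
  induction i with
  | zero =>
    intro _
    refine ⟨by rw [hF0]; simp, ?_⟩
    have h1 : Finset.image C (Finset.range (0 + 1)) = {C 0} := by simp
    simp only [h1, Finset.min'_singleton, hC 0, hF0]
    simp
  | succ n ih =>
    intro hn
    obtain ⟨hne, hmin⟩ := ih (by omega)
    have hins : ((Finset.range (n + 2)).image C).min' (by simp)
        = min (((Finset.range (n + 1)).image C).min' (by simp)) (C (n + 1)) := by
      simp only [Finset.range_add_one (n := n + 1), Finset.image_insert]
      rw [Finset.min'_insert, min_comm]
    rcases hstep n (by omega) with ⟨j, hEq, hmem, -, -⟩ | ⟨-, hlen, hEq⟩ | ⟨-, hlen, hEq⟩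
    · -- child
      have hhead : (F (n + 1)).headI = (F n).headI := by
        rw [hEq, headI_append' _ _ hne]
      have hne' : F (n + 1) ≠ [] := by rw [hEq]; simp
      refine ⟨hne', ?_⟩
      rw [hins, hhead, hmin]
      have hlenn : 1 ≤ (F n).length := List.length_pos_iff.mpr hne
      have hCv : C (n + 1) = ((F n).length : ℤ) + 1 + t - (F n).headI := by
        rw [hC, hEq, headI_append' _ _ hne, List.length_append, List.length_singleton]; push_cast; ring
      have h1 : (1 : ℤ) ≤ ((F n).length : ℤ) := by exact_mod_cast hlenn
      rw [min_eq_left (by rw [hCv]; linarith)]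
    · -- parent
      have hhead : (F (n + 1)).headI = (F n).headI := by
        rw [hEq, headI_dropLast' _ hlen]
      have hne' : F (n + 1) ≠ [] := by
        rw [hEq]
        intro h
        have := congrArg List.length h
        rw [List.length_dropLast] at this
        simp at this
        omega
      refine ⟨hne', ?_⟩
      rw [hins, hhead, hmin]
      have hCv : C (n + 1) = ((F n).length : ℤ) - 1 + t - (F n).headI := by
        rw [hC, hEq, headI_dropLast' _ hlen, List.length_dropLast]
        have h1 : (1:ℕ) ≤ (F n).length := by omega
        push_cast [Nat.cast_sub h1]
        ring
      have h2 : (2 : ℤ) ≤ ((F n).length : ℤ) := by exact_mod_cast hlen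
      rw [min_eq_left (by rw [hCv]; linarith)]
    · -- floor
      have hhead : (F (n + 1)).headI = (F n).headI + 1 := by rw [hEq]; simp
      refine ⟨by rw [hEq]; simp, ?_⟩
      rw [hins, hhead, hmin]
      have hCv : C (n + 1) = (t : ℤ) + 1 - ((F n).headI + 1) := by
        rw [hC, hEq]; push_cast; simp; ring
      rw [min_eq_right (by rw [hCv]; linarith), hCv]
      push_cast; ring
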